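/- arXiv:2208.14129 — 4 statements merged into one kernel-verified Lean document; each statement's English description precedes it below -/
import Mathlib

section
/- Let x₁,…,xₙ be independent random variables each taking value 1 with probability p and 0 with probability 1-p, and let g : [0,1]ⁿ → ℝ be 1-Lipschitz with respect to the ℓ₁ norm. Let X = (x₁,…,xₙ). Then for all 0 ≤ ε ≤ 1, P[|g(X) - E[g(X)]| ≥ εpn] ≤ 2 e^{-ε²pn/3}. -/
open MeasureTheory ProbabilityTheory

namespace LipBern

noncomputable def bval (b : Bool) : ℝ := if b then 1 else 0

noncomputable def q (p : ℝ) (b : Bool) : ℝ := if b then p else 1 - p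

noncomputable def w (p : ℝ) {n : ℕ} (s : Fin n → Bool) : ℝ := ∏ i, q p (s i)

lemma bval_mem (b : Bool) : bval b ∈ Set.Icc (0:ℝ) 1 := by
  cases b <;> simp [bval]

lemma bval_inj {a b : Bool} (h : bval a = bval b) : a = b := by
  cases a <;> cases b <;> simp_all [bval]

lemma sum_cons {n : ℕ} (f : (Fin (n+1) → Bool) → ℝ) :
    ∑ s, f s = ∑ b, ∑ t : Fin n → Bool, f (Fin.cons b t) := by
  calc ∑ s, f s = ∑ x : Bool × (Fin n → Bool), f (Fin.cons x.1 x.2) :=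
        (Fintype.sum_equiv (Fin.consEquiv fun _ => Bool)
          (fun x => f (Fin.cons x.1 x.2)) f (fun x => rfl)).symm
    _ = ∑ b, ∑ t : Fin n → Bool, f (Fin.cons b t) := Fintype.sum_prod_type _

lemma w_cons {p : ℝ} {n : ℕ} (b : Bool) (t : Fin n → Bool) :
    w p (Fin.cons b t) = q p b * w p t := by
  simp [w, Fin.prod_univ_succ]

lemma w_nonneg {p : ℝ} (hp0 : 0 ≤ p) (hp1 : p ≤ 1) {n : ℕ} (s : Fin n → Bool) :
    0 ≤ w p s := by
  refine Finset.prod_nonneg fun i _ => ?_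
  cases s i <;> simp [q] <;> linarith

lemma sum_w (p : ℝ) : ∀ n : ℕ, ∑ s : Fin n → Bool, w p s = 1 := by
  intro n
  induction n with
  | zero => simp [w]
  | succ n ih =>
      rw [sum_cons (fun s => w p s)]
      simp only [w_cons, ← Finset.mul_sum, ih, mul_one]
      simp [q]


open Real

/-- Bernoulli MGF bound. -/
lemma scalarA {p : ℝ} (hp0 : 0 ≤ p) (hp1 : p ≤ 1) (u : ℝ) :
    p * exp (u * (1 - p)) + (1 - p) * exp (-(u * p))
      ≤ exp (p * (exp u - u - 1)) := by
  have h1 : p * exp (u * (1 - p)) + (1 - p) * exp (-(u * p))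
      = exp (-(u * p)) * (1 + p * (exp u - 1)) := by
    rw [show u * (1 - p) = u + -(u * p) by ring, exp_add]; ring
  rw [h1]
  have h2 : 1 + p * (exp u - 1) ≤ exp (p * (exp u - 1)) := by
    linarith [add_one_le_exp (p * (exp u - 1))]
  calc exp (-(u * p)) * (1 + p * (exp u - 1))
      ≤ exp (-(u * p)) * exp (p * (exp u - 1)) :=
        mul_le_mul_of_nonneg_left h2 (exp_nonneg _)
    _ = exp (p * (exp u - u - 1)) := by rw [← exp_add]; ring_nf

lemma mono_aux {a b : ℝ} (ha : 0 ≤ a) (hab : a ≤ b) :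
    exp a - a - 1 ≤ exp b - b - 1 := by
  have h1 : exp a * (b - a + 1) ≤ exp a * exp (b - a) :=
    mul_le_mul_of_nonneg_left (by linarith [add_one_le_exp (b - a)]) (exp_nonneg _)
  rw [← exp_add, show a + (b - a) = b by ring] at h1
  have h2 : 1 ≤ exp a := one_le_exp ha
  nlinarith

lemma key_aux {x : ℝ} (hx : 0 ≤ x) : exp (-x) + x - 1 ≤ exp x - x - 1 := by
  obtain ⟨Q, hQ⟩ : ∃ Q : ℝ, Q = 1 + x + x ^ 2 / 2 + x ^ 3 / 6 := ⟨_, rfl⟩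
  have hb : Q ≤ exp x := by
    have := Real.sum_le_exp_of_nonneg hx 4
    simp [Finset.sum_range_succ, Nat.factorial] at this
    nlinarith [this, hQ]
  have hQ1 : 1 ≤ Q := by nlinarith [hQ]
  have hQ0 : 0 < Q := by linarith
  have hkey : 1 ≤ Q * (Q - 2 * x) := by nlinarith [hQ, sq_nonneg (x ^ 2 / 2 + x ^ 3 / 6), pow_nonneg hx 3]
  have hQ2x : 0 < Q - 2 * x := by nlinarith
  have h3 : Q⁻¹ ≤ Q - 2 * x := by
    rw [inv_le_iff_one_le_mul₀' hQ0]
    linarith [hkey]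
  have h4 : exp (-x) ≤ Q⁻¹ := by
    rw [exp_neg]
    exact inv_anti₀ hQ0 hb
  have h5 : Q ≤ exp x := hb
  linarith

lemma scalarB {u l : ℝ} (h : |u| ≤ l) : exp u - u - 1 ≤ exp l - l - 1 := by
  rcases abs_le.1 h with ⟨h1, h2⟩
  rcases le_or_gt 0 u with hu | hu
  · exact mono_aux hu h2
  · have hx : 0 ≤ -u := by linarith
    have := key_aux hx
    rw [neg_neg] at this
    have h6 : exp (-u) - (-u) - 1 ≤ exp l - l - 1 := mono_aux hx (by linarith)
    linarith

lemma numeric {e : ℝ} (h0 : 0 ≤ e) (h1 : e ≤ 1) :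
    exp (2 * e / 3) ≤ 1 + 2 * e / 3 + e ^ 2 / 3 := by
  have hu0 : 0 ≤ 2 * e / 3 := by linarith
  have hu1 : 2 * e / 3 ≤ 1 := by linarith
  have hb := Real.exp_bound' hu0 hu1 (n := 4) (by norm_num)
  simp [Finset.sum_range_succ, Nat.factorial] at hb
  have h3 : e ^ 3 ≤ e ^ 2 := by nlinarith
  have h4 : e ^ 4 ≤ e ^ 2 := by nlinarith
  nlinarith [hb]


open Real

lemma mgf {p : ℝ} (hp0 : 0 ≤ p) (hp1 : p ≤ 1) :
    ∀ (n : ℕ) (G : (Fin n → Bool) → ℝ),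
      (∀ s t : Fin n → Bool, |G s - G t| ≤ ∑ i, |bval (s i) - bval (t i)|) →
      ∀ l : ℝ, 0 ≤ l →
      ∑ s, w p s * exp (l * (G s - ∑ t, w p t * G t))
        ≤ exp (n * p * (exp l - l - 1)) := by
  intro n
  induction n with
  | zero =>
      intro G hG l hl
      simp [w, Fintype.sum_unique]
  | succ n ih =>
      intro G hG l hl
      obtain ⟨c, hcdef⟩ : ∃ c : ℝ, c = exp l - l - 1 := ⟨_, rfl⟩
      obtain ⟨m, hmdef⟩ : ∃ m : ℝ, m = ∑ t, w p t * G t := ⟨_, rfl⟩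
      obtain ⟨H, hH⟩ : ∃ H : Bool → ℝ,
          ∀ b, H b = ∑ t : Fin n → Bool, w p t * G (Fin.cons b t) :=
        ⟨fun b => ∑ t : Fin n → Bool, w p t * G (Fin.cons b t), fun _ => rfl⟩
      have hm : m = p * H true + (1 - p) * H false := by
        rw [hmdef, sum_cons (fun s => w p s * G s)]
        simp only [w_cons, mul_assoc]
        rw [Fintype.sum_bool, ← Finset.mul_sum, ← Finset.mul_sum, ← hH, ← hH]
        simp [q]
      have hGb : ∀ b, ∀ u v : Fin n → Bool,
          |G (Fin.cons b u) - G (Fin.cons b v)| ≤ ∑ i, |bval (u i) - bval (v i)| := by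
        intro b u v
        have h := hG (Fin.cons b u) (Fin.cons b v)
        rw [Fin.sum_univ_succ, Fin.cons_zero, Fin.cons_zero, sub_self, abs_zero, zero_add]
          at h
        simpa [Fin.cons_succ] using h
      have hIH : ∀ b, ∑ t : Fin n → Bool, w p t * exp (l * (G (Fin.cons b t) - H b))
          ≤ exp (n * p * c) := by
        intro b
        rw [hH b, hcdef]
        exact ih (fun t => G (Fin.cons b t)) (hGb b) l hl
      have hd : |H true - H false| ≤ 1 := by
        have h1 : H true - H false
            = ∑ t : Fin n → Bool, w p t * (G (Fin.cons true t) - G (Fin.cons false t)) := by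
          rw [hH, hH, ← Finset.sum_sub_distrib]
          congr 1; funext t; ring
        rw [h1]
        calc |∑ t : Fin n → Bool, w p t * (G (Fin.cons true t) - G (Fin.cons false t))|
            ≤ ∑ t : Fin n → Bool, |w p t * (G (Fin.cons true t) - G (Fin.cons false t))| :=
              Finset.abs_sum_le_sum_abs _ _
          _ ≤ ∑ t : Fin n → Bool, w p t * 1 := by
              refine Finset.sum_le_sum fun t _ => ?_
              rw [abs_mul, abs_of_nonneg (w_nonneg hp0 hp1 t)]
              refine mul_le_mul_of_nonneg_left ?_ (w_nonneg hp0 hp1 t)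
              have h2 := hG (Fin.cons true t) (Fin.cons false t)
              have h3 : ∑ i : Fin (n+1), |bval ((Fin.cons true t : Fin (n+1) → Bool) i) - bval ((Fin.cons false t : Fin (n+1) → Bool) i)| = 1 := by
                rw [Fin.sum_univ_succ]
                simp [bval]
              rwa [h3] at h2
          _ = 1 := by rw [← Finset.sum_mul, sum_w, one_mul]
      have hq0 : ∀ b, 0 ≤ q p b := by intro b; cases b <;> simp [q] <;> linarith
      have step1 : ∑ s, w p s * exp (l * (G s - m))
          = ∑ b, q p b * exp (l * (H b - m))
              * ∑ t : Fin n → Bool, w p t * exp (l * (G (Fin.cons b t) - H b)) := by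
        rw [sum_cons (fun s => w p s * exp (l * (G s - m)))]
        congr 1; funext b
        rw [Finset.mul_sum]
        congr 1; funext t
        rw [w_cons, show l * (G (Fin.cons b t) - m)
          = l * (H b - m) + l * (G (Fin.cons b t) - H b) by ring, exp_add]
        ring
      have step2 : ∑ b, q p b * exp (l * (H b - m))
              * ∑ t : Fin n → Bool, w p t * exp (l * (G (Fin.cons b t) - H b))
          ≤ (∑ b, q p b * exp (l * (H b - m))) * exp (n * p * c) := by
        rw [Finset.sum_mul]
        refine Finset.sum_le_sum fun b _ => ?_
        exact mul_le_mul_of_nonneg_left (hIH b)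
          (mul_nonneg (hq0 b) (exp_nonneg _))
      obtain ⟨u, hu⟩ : ∃ u : ℝ, u = l * (H true - H false) := ⟨_, rfl⟩
      have habs : |u| ≤ l := by
        rw [hu, abs_mul, abs_of_nonneg hl]
        calc l * |H true - H false| ≤ l * 1 := mul_le_mul_of_nonneg_left hd hl
          _ = l := mul_one l
      have step3 : ∑ b, q p b * exp (l * (H b - m))
          = p * exp (u * (1 - p)) + (1 - p) * exp (-(u * p)) := by
        rw [Fintype.sum_bool]
        have e1 : l * (H true - m) = u * (1 - p) := by rw [hu, hm]; ring
        have e2 : l * (H false - m) = -(u * p) := by rw [hu, hm]; ring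
        rw [e1, e2]
        simp [q]
      have step4 : p * exp (u * (1 - p)) + (1 - p) * exp (-(u * p)) ≤ exp (p * c) := by
        refine (scalarA hp0 hp1 u).trans ?_
        rw [exp_le_exp]
        have := scalarB habs
        rw [← hcdef] at this
        exact mul_le_mul_of_nonneg_left this hp0
      have final : ∑ s, w p s * exp (l * (G s - m)) ≤ exp (p * c) * exp (n * p * c) := by
        rw [step1]
        refine step2.trans ?_
        refine mul_le_mul_of_nonneg_right ?_ (exp_nonneg _)
        rw [step3]; exact step4
      rw [← hmdef, ← hcdef]
      refine final.trans ?_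
      rw [← exp_add]
      apply le_of_eq
      congr 1
      push_cast
      ring

lemma chernoff {p : ℝ} (hp0 : 0 ≤ p) (hp1 : p ≤ 1) {n : ℕ} (G : (Fin n → Bool) → ℝ)
    (hG : ∀ s t : Fin n → Bool, |G s - G t| ≤ ∑ i, |bval (s i) - bval (t i)|)
    (m : ℝ) (hm : m = ∑ t, w p t * G t) (l t : ℝ) (hl : 0 ≤ l) :
    ∑ s ∈ Finset.univ.filter (fun s => t ≤ G s - m), w p s
      ≤ exp (n * p * (exp l - l - 1) - l * t) := by
  calc ∑ s ∈ Finset.univ.filter (fun s => t ≤ G s - m), w p s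
      ≤ ∑ s ∈ Finset.univ.filter (fun s => t ≤ G s - m),
          w p s * exp (l * (G s - m) - l * t) := by
        refine Finset.sum_le_sum fun s hs => ?_
        rw [Finset.mem_filter] at hs
        have h1 : 0 ≤ l * (G s - m) - l * t := by nlinarith [hs.2]
        exact le_mul_of_one_le_right (w_nonneg hp0 hp1 s) (one_le_exp h1)
    _ ≤ ∑ s, w p s * exp (l * (G s - m) - l * t) :=
        Finset.sum_le_sum_of_subset_of_nonneg (Finset.filter_subset _ _)
          (fun s _ _ => mul_nonneg (w_nonneg hp0 hp1 s) (exp_nonneg _))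
    _ = exp (-(l * t)) * ∑ s, w p s * exp (l * (G s - m)) := by
        rw [Finset.mul_sum]
        congr 1; funext s
        rw [show l * (G s - m) - l * t = -(l * t) + l * (G s - m) by ring, exp_add]
        ring
    _ ≤ exp (-(l * t)) * exp (n * p * (exp l - l - 1)) := by
        refine mul_le_mul_of_nonneg_left ?_ (exp_nonneg _)
        rw [hm]
        exact mgf hp0 hp1 n G hG l hl
    _ = exp (n * p * (exp l - l - 1) - l * t) := by rw [← exp_add]; ring_nf

lemma twosided {p : ℝ} (hp0 : 0 ≤ p) (hp1 : p ≤ 1) {n : ℕ} (G : (Fin n → Bool) → ℝ)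
    (hG : ∀ s t : Fin n → Bool, |G s - G t| ≤ ∑ i, |bval (s i) - bval (t i)|)
    (m : ℝ) (hm : m = ∑ t, w p t * G t) (l t : ℝ) (hl : 0 ≤ l) :
    ∑ s ∈ Finset.univ.filter (fun s => t ≤ |G s - m|), w p s
      ≤ 2 * exp (n * p * (exp l - l - 1) - l * t) := by
  classical
  have hneg : ∀ u v : Fin n → Bool,
      |(fun s => -G s) u - (fun s => -G s) v| ≤ ∑ i, |bval (u i) - bval (v i)| := by
    intro u v
    have h := hG v u
    calc |(fun s => -G s) u - (fun s => -G s) v| = |G v - G u| := by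
          simp only []; rw [show -G u - -G v = G v - G u by ring]
      _ ≤ ∑ i, |bval (v i) - bval (u i)| := h
      _ = ∑ i, |bval (u i) - bval (v i)| := by
          refine Finset.sum_congr rfl fun i _ => ?_
          rw [abs_sub_comm]
  have hmneg : -m = ∑ t, w p t * (fun s => -G s) t := by
    rw [hm]
    simp [mul_neg, Finset.sum_neg_distrib]
  have h1 := chernoff hp0 hp1 G hG m hm l t hl
  have h2 := chernoff hp0 hp1 (fun s => -G s) hneg (-m) hmneg l t hl
  have hsub : Finset.univ.filter (fun s => t ≤ |G s - m|)
      ⊆ Finset.univ.filter (fun s => t ≤ G s - m)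
        ∪ Finset.univ.filter (fun s => t ≤ (fun s => -G s) s - -m) := by
    intro s hs
    rw [Finset.mem_filter] at hs
    rw [Finset.mem_union, Finset.mem_filter, Finset.mem_filter]
    rcases abs_cases (G s - m) with ⟨he, _⟩ | ⟨he, _⟩
    · left; exact ⟨Finset.mem_univ s, by rw [← he]; exact hs.2⟩
    · right
      refine ⟨Finset.mem_univ s, ?_⟩
      have := hs.2
      rw [he] at this
      simp only []
      linarith
  calc ∑ s ∈ Finset.univ.filter (fun s => t ≤ |G s - m|), w p s
      ≤ ∑ s ∈ (Finset.univ.filter (fun s => t ≤ G s - m)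
          ∪ Finset.univ.filter (fun s => t ≤ (fun s => -G s) s - -m)), w p s :=
        Finset.sum_le_sum_of_subset_of_nonneg hsub
          (fun s _ _ => w_nonneg hp0 hp1 s)
    _ ≤ ∑ s ∈ Finset.univ.filter (fun s => t ≤ G s - m), w p s
        + ∑ s ∈ Finset.univ.filter (fun s => t ≤ (fun s => -G s) s - -m), w p s := by
        have hui := Finset.sum_union_inter (s₁ := Finset.univ.filter (fun s => t ≤ G s - m))
          (s₂ := Finset.univ.filter (fun s => t ≤ (fun s => -G s) s - -m)) (f := w p)
        have hnn : 0 ≤ ∑ s ∈ (Finset.univ.filter (fun s => t ≤ G s - m)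
            ∩ Finset.univ.filter (fun s => t ≤ (fun s => -G s) s - -m)), w p s :=
          Finset.sum_nonneg fun s _ => w_nonneg hp0 hp1 s
        linarith
    _ ≤ 2 * exp (n * p * (exp l - l - 1) - l * t) := by linarith

lemma finite_main {p : ℝ} (hp0 : 0 ≤ p) (hp1 : p ≤ 1) {n : ℕ} (G : (Fin n → Bool) → ℝ)
    (hG : ∀ s t : Fin n → Bool, |G s - G t| ≤ ∑ i, |bval (s i) - bval (t i)|)
    (m : ℝ) (hm : m = ∑ t, w p t * G t) (ε : ℝ) (hε0 : 0 ≤ ε) (hε1 : ε ≤ 1) :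
    ∑ s ∈ Finset.univ.filter (fun s => ε * p * n ≤ |G s - m|), w p s
      ≤ 2 * exp (-(ε ^ 2 * p * n) / 3) := by
  have h := twosided hp0 hp1 G hG m hm (2 * ε / 3) (ε * p * n) (by linarith)
  refine h.trans ?_
  have hnum := numeric hε0 hε1
  have hpn : (0 : ℝ) ≤ p * n := mul_nonneg hp0 (Nat.cast_nonneg n)
  have hK : exp (2 * ε / 3) - 2 * ε / 3 - 1 - 2 * ε ^ 2 / 3 + ε ^ 2 / 3 ≤ 0 := by nlinarith
  have h2 : p * ↑n * (exp (2 * ε / 3) - 2 * ε / 3 - 1 - 2 * ε ^ 2 / 3 + ε ^ 2 / 3) ≤ 0 :=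
    mul_nonpos_of_nonneg_of_nonpos hpn hK
  have hexp : ↑n * p * (exp (2 * ε / 3) - 2 * ε / 3 - 1) - 2 * ε / 3 * (ε * p * ↑n)
      ≤ -(ε ^ 2 * p * ↑n) / 3 := by nlinarith
  have := exp_le_exp.2 hexp
  linarith

end LipBern

open LipBern

/-- If `x₁,…,xₙ` are independent Bernoulli(p)-valued (values 1 and 0)
random variables and `g : [0,1]ⁿ → ℝ` is 1-Lipschitz in the ℓ₁ norm, then for
`0 ≤ ε ≤ 1`, `P[|g(X) - E[g(X)]| ≥ εpn] ≤ 2 e^{-ε²pn/3}`. -/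
theorem lipschitz_bernoulli_concentration
    {Ω : Type*} [MeasurableSpace Ω] (μ : Measure Ω) [IsProbabilityMeasure μ]
    (n : ℕ) (p : ℝ) (hp0 : 0 ≤ p) (hp1 : p ≤ 1)
    (X : Fin n → Ω → ℝ) (hmeas : ∀ i, Measurable (X i))
    (hindep : iIndepFun X μ)
    (hdist1 : ∀ i, μ {ω | X i ω = 1} = ENNReal.ofReal p)
    (hdist0 : ∀ i, μ {ω | X i ω = 0} = ENNReal.ofReal (1 - p))
    (g : (Fin n → ℝ) → ℝ)
    (hg : ∀ x y : Fin n → ℝ, (∀ i, x i ∈ Set.Icc (0:ℝ) 1) →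
      (∀ i, y i ∈ Set.Icc (0:ℝ) 1) → |g x - g y| ≤ ∑ i, |x i - y i|)
    (ε : ℝ) (hε0 : 0 ≤ ε) (hε1 : ε ≤ 1) :
    (μ {ω | ε * p * n ≤ |g (fun i => X i ω) - ∫ ω', g (fun i => X i ω') ∂μ|}).toReal
      ≤ 2 * Real.exp (-(ε ^ 2 * p * n) / 3) := by
  classical
  obtain ⟨G, hGdef⟩ : ∃ G : (Fin n → Bool) → ℝ,
      G = fun s => g (fun i => bval (s i)) := ⟨_, rfl⟩
  have hGlip : ∀ s t : Fin n → Bool, |G s - G t| ≤ ∑ i, |bval (s i) - bval (t i)| := by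
    intro s t
    rw [hGdef]
    exact hg _ _ (fun i => bval_mem _) (fun i => bval_mem _)
  obtain ⟨A, hAdef⟩ : ∃ A : (Fin n → Bool) → Set Ω,
      A = fun s => ⋂ i, X i ⁻¹' {bval (s i)} := ⟨_, rfl⟩
  have hAmeas : ∀ s, MeasurableSet (A s) := by
    intro s; rw [hAdef]
    exact MeasurableSet.iInter fun i => (hmeas i) (measurableSet_singleton _)
  have hpre : ∀ (i : Fin n) (b : Bool), μ (X i ⁻¹' {bval b}) = ENNReal.ofReal (q p b) := by
    intro i b
    cases b
    · have h : X i ⁻¹' {bval false} = {ω | X i ω = 0} := by ext ω; simp [bval]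
      rw [h, hdist0 i]; simp [q]
    · have h : X i ⁻¹' {bval true} = {ω | X i ω = 1} := by ext ω; simp [bval]
      rw [h, hdist1 i]; simp [q]
  have hA : ∀ s, μ (A s) = ENNReal.ofReal (w p s) := by
    intro s
    have h := hindep.measure_inter_preimage_eq_mul (S := Finset.univ)
      (sets := fun i => {bval (s i)}) (fun i _ => measurableSet_singleton _)
    have h2 : (⋂ i ∈ Finset.univ, X i ⁻¹' {bval (s i)}) = A s := by
      rw [hAdef]; simp
    rw [h2] at h
    rw [h, Finset.prod_congr rfl (fun i _ => hpre i (s i)),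
      ← ENNReal.ofReal_prod_of_nonneg]
    · rfl
    · intro i _
      cases s i <;> simp [q] <;> linarith
  obtain ⟨N, hNdef⟩ : ∃ N : Set Ω, N = ⋂ i, X i ⁻¹' {(1:ℝ), 0} := ⟨_, rfl⟩
  have hNc : μ Nᶜ = 0 := by
    rw [hNdef, Set.compl_iInter]
    refine measure_iUnion_null fun i => ?_
    have hsplit : X i ⁻¹' {(1:ℝ), 0} = {ω | X i ω = 1} ∪ {ω | X i ω = 0} := by
      ext ω; simp [Set.mem_preimage]
    have hdisj : Disjoint {ω | X i ω = 1} {ω | X i ω = 0} := by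
      rw [Set.disjoint_left]
      intro ω h1 h0
      simp only [Set.mem_setOf_eq] at h1 h0
      rw [h1] at h0
      exact one_ne_zero h0
    have hms : MeasurableSet (X i ⁻¹' {(1:ℝ), 0}) :=
      (hmeas i) ((measurableSet_singleton (0:ℝ)).insert 1)
    have hone : μ (X i ⁻¹' {(1:ℝ), 0}) = 1 := by
      have hms0 : MeasurableSet {ω | X i ω = 0} := (hmeas i) (measurableSet_singleton 0)
      rw [hsplit, measure_union hdisj hms0, hdist1 i, hdist0 i,
        ← ENNReal.ofReal_add hp0 (by linarith)]
      norm_num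
    rw [measure_compl hms (measure_ne_top μ _), hone, measure_univ]
    simp
  have hmemN : ∀ ω, ω ∈ N → ∀ i, X i ω = 1 ∨ X i ω = 0 := by
    intro ω hω i
    rw [hNdef] at hω
    have := Set.mem_iInter.1 hω i
    simpa using this
  have hkey : ∀ ω ∈ N, ∃ s : Fin n → Bool,
      ω ∈ A s ∧ (fun i => X i ω) = fun i => bval (s i) := by
    intro ω hω
    have hval : ∀ i, X i ω = bval (decide (X i ω = 1)) := by
      intro i
      rcases hmemN ω hω i with h | h
      · simp [h, bval]
      · have h1 : ¬ (X i ω = 1) := by rw [h]; norm_num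
        simp [h, h1, bval]
    refine ⟨fun i => decide (X i ω = 1), ?_, ?_⟩
    · rw [hAdef]
      exact Set.mem_iInter.2 fun i => by simpa using (hval i)
    · funext i; exact hval i
  have hmemA : ∀ (s : Fin n → Bool) ω, ω ∈ A s → ∀ i, X i ω = bval (s i) := by
    intro s ω hωs i
    rw [hAdef] at hωs
    have := Set.mem_iInter.1 hωs i
    simpa using this
  -- the mean
  have hint : (∫ ω', g (fun i => X i ω') ∂μ) = ∑ s, w p s * G s := by
    have hae : (fun ω => g (fun i => X i ω))
        =ᵐ[μ] (fun ω => ∑ s, Set.indicator (A s) (fun _ => G s) ω) := by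
      rw [Filter.eventuallyEq_iff_exists_mem]
      refine ⟨N, ?_, ?_⟩
      · rw [MeasureTheory.mem_ae_iff]; exact hNc
      · intro ω hω
        obtain ⟨s, hωs, hXω⟩ := hkey ω hω
        have huniq : ∀ s' : Fin n → Bool, ω ∈ A s' → s' = s := by
          intro s' hs'
          funext i
          have h1 : X i ω = bval (s' i) := hmemA s' ω hs' i
          have h2 : X i ω = bval (s i) := congrFun hXω i
          exact bval_inj (h1.symm.trans h2)
        have hsum : ∑ s', Set.indicator (A s') (fun _ => G s') ω = G s := by
          rw [Finset.sum_eq_single s]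
          · rw [Set.indicator_of_mem hωs]
          · intro s' _ hne
            rw [Set.indicator_of_notMem]
            intro hmem; exact hne (huniq s' hmem)
          · intro h; exact absurd (Finset.mem_univ s) h
        show g (fun i => X i ω) = ∑ s', Set.indicator (A s') (fun _ => G s') ω
        rw [hsum, hGdef]
        exact congrArg g hXω
    rw [integral_congr_ae hae, MeasureTheory.integral_finset_sum]
    · refine Finset.sum_congr rfl fun s _ => ?_
      rw [MeasureTheory.integral_indicator_const (G s) (hAmeas s), measureReal_def, hA s,
        ENNReal.toReal_ofReal (w_nonneg hp0 hp1 s), smul_eq_mul]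
    · intro s _
      exact (integrable_indicator_iff (hAmeas s)).2
        (integrableOn_const (measure_lt_top μ _).ne)
  rw [hint]
  obtain ⟨bad, hbad⟩ : ∃ bad : Finset (Fin n → Bool),
      bad = Finset.univ.filter (fun s => ε * p * n ≤ |G s - ∑ t, w p t * G t|) := ⟨_, rfl⟩
  have hEsub : {ω | ε * p * ↑n ≤ |g (fun i => X i ω) - ∑ s, w p s * G s|}
      ⊆ (⋃ s ∈ bad, A s) ∪ Nᶜ := by
    intro ω hω
    by_cases hN : ω ∈ N
    · left
      obtain ⟨s, hωs, hXω⟩ := hkey ω hN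
      have hgs : g (fun i => X i ω) = G s := by rw [hGdef]; exact congrArg g hXω
      have hω' : ε * p * ↑n ≤ |g (fun i => X i ω) - ∑ t, w p t * G t| := hω
      have hs : s ∈ bad := by
        rw [hbad, Finset.mem_filter]
        refine ⟨Finset.mem_univ s, ?_⟩
        rwa [hgs] at hω'
      exact Set.mem_biUnion hs hωs
    · right; exact hN
  have hμE : μ {ω | ε * p * ↑n ≤ |g (fun i => X i ω) - ∑ s, w p s * G s|}
      ≤ ENNReal.ofReal (∑ s ∈ bad, w p s) := by
    refine (measure_mono hEsub).trans ?_
    refine (measure_union_le _ _).trans ?_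
    rw [hNc, add_zero]
    refine (measure_biUnion_finset_le _ _).trans ?_
    rw [Finset.sum_congr rfl (fun s _ => hA s),
      ← ENNReal.ofReal_sum_of_nonneg (fun s _ => w_nonneg hp0 hp1 s)]
  have hfin : ∑ s ∈ bad, w p s ≤ 2 * Real.exp (-(ε ^ 2 * p * n) / 3) := by
    rw [hbad]
    exact finite_main hp0 hp1 G hGlip (∑ t, w p t * G t) rfl ε hε0 hε1
  have h1 := ENNReal.toReal_le_of_le_ofReal
    (Finset.sum_nonneg fun s _ => w_nonneg hp0 hp1 s) hμE
  linarith
end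

section
/- Let x₁,…,xₙ be independent random variables taking value b with probability p and 0 with probability 1-p, and let g : [0,b]ⁿ → ℝ be L-Lipschitz in the ℓ₁ norm. Then for all 0 ≤ ε ≤ 1, P[|g(X) - E[g(X)]| ≥ ε p n b L] ≤ 2 e^{-ε²pn/3}, where X = (x₁,…,xₙ). -/
open MeasureTheory ProbabilityTheory

section LipschitzBernoulliAux
open Finset Real
open Finset Real

section Core


variable {p : ℝ}

/-- weight of an assignment -/
def bw (p : ℝ) {m : ℕ} (c : Fin m → Bool) : ℝ := ∏ i, (if c i then p else 1 - p)

/-- expectation under the product Bernoulli measure -/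
def bEx (p : ℝ) {m : ℕ} (f : (Fin m → Bool) → ℝ) : ℝ := ∑ c, bw p c * f c
def BDiff (D : ℝ) {m : ℕ} (f : (Fin m → Bool) → ℝ) : Prop :=
  ∀ c i, |f (Function.update c i true) - f (Function.update c i false)| ≤ D

lemma bw_nonneg (hp0 : 0 ≤ p) (hp1 : p ≤ 1) {m : ℕ} (c : Fin m → Bool) : 0 ≤ bw p c :=
  Finset.prod_nonneg fun i _ => by split <;> linarith

lemma sum_cons {m : ℕ} (F : (Fin (m+1) → Bool) → ℝ) :
    ∑ c, F c = ∑ c' : Fin m → Bool, (F (Fin.cons true c') + F (Fin.cons false c')) := by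
  rw [← (Fin.consEquiv (fun _ => Bool)).sum_comp F]
  rw [Fintype.sum_prod_type_right]
  congr 1; ext c'
  simp [Fin.consEquiv]

lemma bw_cons (a : Bool) {m : ℕ} (c' : Fin m → Bool) :
    bw p (Fin.cons a c') = (if a then p else 1 - p) * bw p c' := by
  unfold bw
  rw [Fin.prod_univ_succ]
  simp

lemma bEx_succ {m : ℕ} (f : (Fin (m+1) → Bool) → ℝ) :
    bEx p f = bEx p (fun c' => p * f (Fin.cons true c') + (1-p) * f (Fin.cons false c')) := by
  unfold bEx
  rw [sum_cons (fun c => bw p c * f c)]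
  congr 1; ext c'
  rw [bw_cons, bw_cons]
  simp; ring

lemma bEx_zero (f : (Fin 0 → Bool) → ℝ) : bEx p f = f (fun i => i.elim0) := by
  unfold bEx bw
  rw [Fintype.sum_subsingleton _ (fun i => i.elim0)]
  simp

lemma bEx_neg {m : ℕ} (f : (Fin m → Bool) → ℝ) : bEx p (fun c => - f c) = - bEx p f := by
  unfold bEx; rw [← Finset.sum_neg_distrib]; congr 1; ext c; ring


-- e^u ≤ 1 + u + (2/3) u² for |u| ≤ 3/4
lemma exp_le_quad {u : ℝ} (hu : |u| ≤ 3/4) : Real.exp u ≤ 1 + u + (2/3) * u ^ 2 := by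
  have h1 : |u| ≤ 1 := hu.trans (by norm_num)
  have h := Real.exp_bound h1 (n := 3) (by norm_num)
  have h2 : ∑ m ∈ range 3, u ^ m / m.factorial = 1 + u + u ^ 2 / 2 := by
    norm_num [Finset.sum_range_succ]
  rw [h2] at h
  have h3 : Real.exp u - (1 + u + u ^ 2 / 2) ≤ |u| ^ 3 * (4 / (6 * 3)) := by
    have := (abs_sub_le_iff.1 h).1
    simpa [Nat.factorial] using this
  have h4 : |u| ^ 3 * (4 / (6 * 3)) ≤ (3/4) * u ^ 2 * (4 / 18) := by
    have : |u| ^ 3 = |u| * u ^ 2 := by rw [pow_succ']; rw [sq_abs]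
    rw [this]
    nlinarith [sq_nonneg u, abs_nonneg u]
  nlinarith

lemma bern_mgf {p u : ℝ} (hp0 : 0 ≤ p) (hp1 : p ≤ 1) (hu : |u| ≤ 3/4) :
    p * Real.exp ((1-p)*u) + (1-p) * Real.exp (-(p*u)) ≤ Real.exp ((2/3) * p * u^2) := by
  have key : p * Real.exp ((1-p)*u) + (1-p) * Real.exp (-(p*u))
      = Real.exp (-(p*u)) * (1 + p * (Real.exp u - 1)) := by
    rw [show (1-p)*u = u + -(p*u) by ring, Real.exp_add]
    ring
  rw [key]
  have h1 : 1 + p * (Real.exp u - 1) ≤ Real.exp (p * (Real.exp u - 1)) := by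
    have := Real.add_one_le_exp (p * (Real.exp u - 1)); linarith
  have h2 : Real.exp (-(p*u)) * (1 + p * (Real.exp u - 1))
      ≤ Real.exp (-(p*u)) * Real.exp (p * (Real.exp u - 1)) := by
    apply mul_le_mul_of_nonneg_left h1 (Real.exp_nonneg _)
  refine h2.trans ?_
  rw [← Real.exp_add]
  apply Real.exp_le_exp.2
  have h3 : Real.exp u - 1 - u ≤ (2/3) * u ^ 2 := by
    have := exp_le_quad hu; linarith
  nlinarith [sq_nonneg u]




lemma bEx_mono (hp0 : 0 ≤ p) (hp1 : p ≤ 1) {m : ℕ} {f g : (Fin m → Bool) → ℝ}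
    (h : ∀ c, f c ≤ g c) : bEx p f ≤ bEx p g :=
  Finset.sum_le_sum fun c _ => mul_le_mul_of_nonneg_left (h c) (bw_nonneg hp0 hp1 c)

lemma bEx_const_mul {m : ℕ} (K : ℝ) (f : (Fin m → Bool) → ℝ) :
    bEx p (fun c => K * f c) = K * bEx p f := by
  unfold bEx; rw [Finset.mul_sum]; congr 1; ext c; ring

lemma BDiff_step {D : ℝ} (hp0 : 0 ≤ p) (hp1 : p ≤ 1) {m : ℕ} {f : (Fin (m+1) → Bool) → ℝ}
    (hf : BDiff D f) :
    BDiff D (fun c' => p * f (Fin.cons true c') + (1-p) * f (Fin.cons false c')) := by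
  intro c' i
  have h1 := hf (Fin.cons true c') i.succ
  have h2 := hf (Fin.cons false c') i.succ
  rw [← Fin.cons_update, ← Fin.cons_update] at h1 h2
  have e : ∀ a : Bool, (fun c' => p * f (Fin.cons true c') + (1-p) * f (Fin.cons false c'))
      (Function.update c' i a)
      = p * f (Fin.cons true (Function.update c' i a))
        + (1-p) * f (Fin.cons false (Function.update c' i a)) := fun a => rfl
  rw [e, e]
  calc |p * f (Fin.cons true (Function.update c' i true))
        + (1-p) * f (Fin.cons false (Function.update c' i true))
        - (p * f (Fin.cons true (Function.update c' i false))
        + (1-p) * f (Fin.cons false (Function.update c' i false)))|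
      = |p * (f (Fin.cons true (Function.update c' i true))
          - f (Fin.cons true (Function.update c' i false)))
        + (1-p) * (f (Fin.cons false (Function.update c' i true))
          - f (Fin.cons false (Function.update c' i false)))| := by ring_nf
    _ ≤ p * |f (Fin.cons true (Function.update c' i true))
          - f (Fin.cons true (Function.update c' i false))|
        + (1-p) * |f (Fin.cons false (Function.update c' i true))
          - f (Fin.cons false (Function.update c' i false))| := by
        refine (abs_add_le _ _).trans ?_
        rw [abs_mul, abs_mul, abs_of_nonneg hp0, abs_of_nonneg (by linarith : (0:ℝ) ≤ 1 - p)]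
    _ ≤ p * D + (1-p) * D := by
        have hq : (0:ℝ) ≤ 1 - p := by linarith
        have := mul_le_mul_of_nonneg_left h1 hp0
        have := mul_le_mul_of_nonneg_left h2 hq
        linarith
    _ = D := by ring

lemma mgf_bound (hp0 : 0 ≤ p) (hp1 : p ≤ 1) {D t : ℝ} (hD : 0 ≤ D) (ht : 0 ≤ t)
    (htD : t * D ≤ 3/4) :
    ∀ {m : ℕ} (f : (Fin m → Bool) → ℝ), BDiff D f →
      bEx p (fun c => Real.exp (t * (f c - bEx p f)))
        ≤ Real.exp ((2/3) * m * p * (t*D)^2) := by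
  intro m
  induction m with
  | zero =>
      intro f _
      rw [bEx_zero f, bEx_zero]
      simp
  | succ m ih =>
      intro f hf
      set E₁ := bEx p f with hE₁
      set F : (Fin m → Bool) → ℝ :=
        fun c' => p * f (Fin.cons true c') + (1-p) * f (Fin.cons false c') with hF
      have hEF : E₁ = bEx p F := bEx_succ f
      set K := Real.exp ((2/3) * p * (t*D)^2) with hK
      have hstep : ∀ c' : Fin m → Bool,
          p * Real.exp (t * (f (Fin.cons true c') - E₁))
            + (1-p) * Real.exp (t * (f (Fin.cons false c') - E₁))
          ≤ K * Real.exp (t * (F c' - E₁)) := by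
        intro c'
        set d := f (Fin.cons true c') - f (Fin.cons false c') with hd
        have hdD : |d| ≤ D := by
          have := hf (Fin.cons true c') 0
          rwa [Fin.update_cons_zero, Fin.update_cons_zero] at this
        have h1 : f (Fin.cons true c') - E₁ = (F c' - E₁) + (1-p) * d := by
          rw [hF]; ring
        have h2 : f (Fin.cons false c') - E₁ = (F c' - E₁) + (-(p * d)) := by
          rw [hF]; ring
        have hu : |t * d| ≤ 3/4 := by
          rw [abs_mul, abs_of_nonneg ht]
          calc t * |d| ≤ t * D := by gcongr
            _ ≤ 3/4 := htD
        have hmgf := bern_mgf hp0 hp1 hu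
        have hsq : (t*d)^2 ≤ (t*D)^2 := by
          rw [← sq_abs (t*d), abs_mul, abs_of_nonneg ht]
          gcongr
        clear_value d
        calc p * Real.exp (t * (f (Fin.cons true c') - E₁))
              + (1-p) * Real.exp (t * (f (Fin.cons false c') - E₁))
            = Real.exp (t * (F c' - E₁)) *
              (p * Real.exp ((1-p)*(t*d)) + (1-p) * Real.exp (-(p*(t*d)))) := by
              rw [h1, h2, mul_add, mul_add, Real.exp_add, Real.exp_add]
              ring_nf
          _ ≤ Real.exp (t * (F c' - E₁)) * Real.exp ((2/3) * p * (t*d)^2) := by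
              exact mul_le_mul_of_nonneg_left hmgf (Real.exp_nonneg _)
          _ ≤ K * Real.exp (t * (F c' - E₁)) := by
              rw [mul_comm]
              apply mul_le_mul_of_nonneg_right _ (Real.exp_nonneg _)
              rw [hK]
              apply Real.exp_le_exp.2
              have h5 := mul_le_mul_of_nonneg_left hsq hp0
              nlinarith [h5]
      calc bEx p (fun c => Real.exp (t * (f c - E₁)))
          = bEx p (fun c' => p * Real.exp (t * (f (Fin.cons true c') - E₁))
              + (1-p) * Real.exp (t * (f (Fin.cons false c') - E₁))) :=
            bEx_succ _
        _ ≤ bEx p (fun c' => K * Real.exp (t * (F c' - E₁))) :=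
            bEx_mono hp0 hp1 hstep
        _ = K * bEx p (fun c' => Real.exp (t * (F c' - bEx p F))) := by
            rw [bEx_const_mul, ← hEF]
        _ ≤ K * Real.exp ((2/3) * m * p * (t*D)^2) := by
            apply mul_le_mul_of_nonneg_left (ih F (BDiff_step hp0 hp1 hf)) (Real.exp_nonneg _)
        _ ≤ Real.exp ((2/3) * (m+1 : ℕ) * p * (t*D)^2) := by
            rw [hK, ← Real.exp_add]
            apply Real.exp_le_exp.2
            push_cast
            ring_nf
            exact le_rfl



lemma tail_one_sided (hp0 : 0 ≤ p) (hp1 : p ≤ 1) {D t a : ℝ} (hD : 0 ≤ D) (ht : 0 ≤ t)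
    (htD : t * D ≤ 3/4) {m : ℕ} (f : (Fin m → Bool) → ℝ) (hf : BDiff D f) :
    ∑ c ∈ univ.filter (fun c => a ≤ f c - bEx p f), bw p c
      ≤ Real.exp ((2/3) * m * p * (t*D)^2 - t*a) := by
  have step1 : ∑ c ∈ univ.filter (fun c => a ≤ f c - bEx p f), bw p c
      ≤ ∑ c ∈ univ.filter (fun c => a ≤ f c - bEx p f),
          bw p c * Real.exp (t * (f c - bEx p f) - t * a) := by
    apply Finset.sum_le_sum
    intro c hc
    rw [Finset.mem_filter] at hc
    have h1 : 0 ≤ t * (f c - bEx p f) - t * a := by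
      have := mul_le_mul_of_nonneg_left hc.2 ht
      nlinarith
    nlinarith [Real.one_le_exp h1, bw_nonneg hp0 hp1 c]
  have step2 : ∑ c ∈ univ.filter (fun c => a ≤ f c - bEx p f),
          bw p c * Real.exp (t * (f c - bEx p f) - t * a)
      ≤ ∑ c, bw p c * Real.exp (t * (f c - bEx p f) - t * a) := by
    apply Finset.sum_le_sum_of_subset_of_nonneg (Finset.filter_subset _ _)
    intro c _ _
    exact mul_nonneg (bw_nonneg hp0 hp1 c) (Real.exp_nonneg _)
  have step3 : ∑ c, bw p c * Real.exp (t * (f c - bEx p f) - t * a)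
      = Real.exp (-(t*a)) * ∑ c, bw p c * Real.exp (t * (f c - bEx p f)) := by
    rw [Finset.mul_sum]
    apply Finset.sum_congr rfl
    intro c _
    rw [show t * (f c - bEx p f) - t * a = -(t*a) + t * (f c - bEx p f) by ring, Real.exp_add]
    ring
  have step4 := mgf_bound hp0 hp1 hD ht htD f hf
  calc ∑ c ∈ univ.filter (fun c => a ≤ f c - bEx p f), bw p c
      ≤ Real.exp (-(t*a)) * ∑ c, bw p c * Real.exp (t * (f c - bEx p f)) := by
        rw [← step3]; exact step1.trans step2
    _ ≤ Real.exp (-(t*a)) * Real.exp ((2/3) * m * p * (t*D)^2) :=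
        mul_le_mul_of_nonneg_left step4 (Real.exp_nonneg _)
    _ = Real.exp ((2/3) * m * p * (t*D)^2 - t*a) := by
        rw [← Real.exp_add]; ring_nf

lemma BDiff_neg {D : ℝ} {m : ℕ} {f : (Fin m → Bool) → ℝ} (hf : BDiff D f) :
    BDiff D (fun c => - f c) := by
  intro c i
  have := hf c i
  rw [show -f (Function.update c i true) - -f (Function.update c i false)
    = -(f (Function.update c i true) - f (Function.update c i false)) by ring, abs_neg]
  exact this

lemma tail_two_sided {m : ℕ} (hp0 : 0 < p) (hp1 : p < 1) {D ε : ℝ} (hD : 0 < D)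
    (hε0 : 0 ≤ ε) (hε1 : ε ≤ 1) (f : (Fin m → Bool) → ℝ) (hf : BDiff D f) :
    ∑ c ∈ univ.filter (fun c => ε * p * m * D ≤ |f c - bEx p f|), bw p c
      ≤ 2 * Real.exp (-(ε^2 * p * m) / 3) := by
  set v : ℝ := 3 * ε / (3 + ε) with hv
  have hv0 : 0 ≤ v := by positivity
  have hv34 : v ≤ 3/4 := by
    rw [hv, div_le_iff₀ (by linarith)]
    linarith
  set t : ℝ := v / D with ht'
  have ht : 0 ≤ t := div_nonneg hv0 hD.le
  have htD : t * D = v := div_mul_cancel₀ _ hD.ne'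
  have hv' : v * (3 + ε) = 3 * ε :=
    div_mul_cancel₀ _ (by positivity : (3:ℝ) + ε ≠ 0)
  have hkey : (2/3) * v^2 - ε * v + ε^2/3 ≤ 0 := by
    have h3 : (0:ℝ) < 3 + ε := by linarith
    have expand : ((2/3)*v^2 - ε*v + ε^2/3) * ((3+ε)*(3+ε)) = ε^3*(ε-3)/3 := by
      linear_combination ((2/3)*v*(3+ε) - ε - ε^2) * hv'
    have h6 : ε^3*(ε-3)/3 ≤ 0 := by nlinarith [pow_nonneg hε0 3]
    nlinarith [expand, h6, mul_pos h3 h3]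
  have hexp : (2/3) * (m:ℝ) * p * (t*D)^2 - t * (ε * p * m * D) ≤ -(ε^2 * p * m) / 3 := by
    rw [htD]
    have htεD : t * (ε * p * (m:ℝ) * D) = ε * p * m * v := by
      rw [ht']; field_simp
    rw [htεD]
    nlinarith [mul_le_mul_of_nonneg_left hkey (mul_nonneg hp0.le (Nat.cast_nonneg m))]
  -- two-sided split
  set a : ℝ := ε * p * m * D with ha
  set E := bEx p f with hE
  have hsub : univ.filter (fun c : Fin m → Bool => a ≤ |f c - E|) ⊆
      univ.filter (fun c => a ≤ f c - E) ∪ univ.filter (fun c => a ≤ -(f c - E)) := by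
    intro c hc
    rw [Finset.mem_filter] at hc
    rw [Finset.mem_union, Finset.mem_filter, Finset.mem_filter]
    rcases abs_cases (f c - E) with ⟨h, _⟩ | ⟨h, _⟩
    · left; exact ⟨Finset.mem_univ c, by rw [← h]; exact hc.2⟩
    · right; exact ⟨Finset.mem_univ c, by rw [← h]; exact hc.2⟩
  have hnn : ∀ c ∈ univ.filter (fun c => a ≤ f c - E) ∪
      univ.filter (fun c : Fin m → Bool => a ≤ -(f c - E)), 0 ≤ bw p c :=
    fun c _ => bw_nonneg hp0.le hp1.le c
  have hB : Real.exp ((2/3) * (m:ℝ) * p * (t*D)^2 - t * a) ≤ Real.exp (-(ε^2 * p * m) / 3) :=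
    Real.exp_le_exp.2 hexp
  have side1 : ∑ c ∈ univ.filter (fun c => a ≤ f c - E), bw p c
      ≤ Real.exp (-(ε^2 * p * m) / 3) :=
    (tail_one_sided hp0.le hp1.le hD.le ht (htD.le.trans hv34) f hf).trans hB
  have side2 : ∑ c ∈ univ.filter (fun c : Fin m → Bool => a ≤ -(f c - E)), bw p c
      ≤ Real.exp (-(ε^2 * p * m) / 3) := by
    have hneg := tail_one_sided (a := a) hp0.le hp1.le hD.le ht (htD.le.trans hv34)
      (fun c => - f c) (BDiff_neg hf)
    have hfe : univ.filter (fun c : Fin m → Bool => a ≤ -(f c - E)) =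
        univ.filter (fun c => a ≤ (fun c => - f c) c - bEx p (fun c => - f c)) := by
      apply Finset.filter_congr
      intro c _
      rw [bEx_neg]
      constructor <;> intro h <;> simp only [hE] at h ⊢ <;> linarith
    rw [hfe]
    exact hneg.trans hB
  calc ∑ c ∈ univ.filter (fun c : Fin m → Bool => a ≤ |f c - E|), bw p c
      ≤ ∑ c ∈ (univ.filter (fun c => a ≤ f c - E) ∪
          univ.filter (fun c : Fin m → Bool => a ≤ -(f c - E))), bw p c :=
        Finset.sum_le_sum_of_subset_of_nonneg hsub (fun c hc _ => hnn c hc)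
    _ ≤ (∑ c ∈ univ.filter (fun c => a ≤ f c - E), bw p c)
        + ∑ c ∈ univ.filter (fun c : Fin m → Bool => a ≤ -(f c - E)), bw p c := by
        have := Finset.sum_union_inter (s₁ := univ.filter (fun c => a ≤ f c - E))
          (s₂ := univ.filter (fun c : Fin m → Bool => a ≤ -(f c - E))) (f := bw p)
        have hnn2 : 0 ≤ ∑ c ∈ (univ.filter (fun c => a ≤ f c - E) ∩
            univ.filter (fun c : Fin m → Bool => a ≤ -(f c - E))), bw p c :=
          Finset.sum_nonneg fun c _ => bw_nonneg hp0.le hp1.le c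
        linarith
    _ ≤ 2 * Real.exp (-(ε^2 * p * m) / 3) := by linarith


end Core

end LipschitzBernoulliAux

open Finset in

/-- If `x₁,…,xₙ` are independent random variables taking value `b`
with probability `p` and `0` otherwise, and `g : [0,b]ⁿ → ℝ` is `L`-Lipschitz in
the ℓ₁ norm, then for `0 ≤ ε ≤ 1`,
`P[|g(X) - E[g(X)]| ≥ ε p n b L] ≤ 2 e^{-ε²pn/3}`. -/
theorem lipschitz_scaled_bernoulli_concentration
    {Ω : Type*} [MeasurableSpace Ω] (μ : Measure Ω) [IsProbabilityMeasure μ]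
    (n : ℕ) (p b L : ℝ) (hp0 : 0 < p) (hp1 : p < 1) (hb : 0 < b) (hL : 0 < L)
    (X : Fin n → Ω → ℝ) (hmeas : ∀ i, Measurable (X i))
    (hindep : iIndepFun X μ)
    (hdistb : ∀ i, μ {ω | X i ω = b} = ENNReal.ofReal p)
    (hdist0 : ∀ i, μ {ω | X i ω = 0} = ENNReal.ofReal (1 - p))
    (g : (Fin n → ℝ) → ℝ)
    (hg : ∀ x y : Fin n → ℝ, (∀ i, x i ∈ Set.Icc (0:ℝ) b) →
      (∀ i, y i ∈ Set.Icc (0:ℝ) b) → |g x - g y| ≤ L * ∑ i, |x i - y i|)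
    (ε : ℝ) (hε0 : 0 ≤ ε) (hε1 : ε ≤ 1) :
    (μ {ω | ε * p * n * b * L ≤
        |g (fun i => X i ω) - ∫ ω', g (fun i => X i ω') ∂μ|}).toReal
      ≤ 2 * Real.exp (-(ε ^ 2 * p * n) / 3) := by
  classical
  -- the Boolean coding map
  set T : Ω → (Fin n → Bool) := fun ω i => decide (X i ω = b) with hT
  have hTmeas : Measurable T := by
    apply measurable_pi_lambda
    intro i
    apply measurable_to_bool
    have : (fun ω => decide (X i ω = b)) ⁻¹' {true} = X i ⁻¹' {b} := by
      ext ω; simp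
    rw [this]
    exact hmeas i (measurableSet_singleton b)
  set G : (Fin n → Bool) → ℝ := fun c => g (fun i => if c i then b else 0) with hG
  have hGmeas : Measurable G := measurable_of_countable G
  set ν : Measure (Fin n → Bool) := μ.map T with hν
  have hνprob : IsProbabilityMeasure ν := Measure.isProbabilityMeasure_map hTmeas.aemeasurable
  -- a.s. the values are in {0, b}
  have hgood_ae : ∀ᵐ ω ∂μ, ∀ i, X i ω = b ∨ X i ω = 0 := by
    rw [ae_all_iff]
    intro i
    have hmb : MeasurableSet {ω | X i ω = b} := hmeas i (measurableSet_singleton b)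
    have hm0 : MeasurableSet {ω | X i ω = 0} := hmeas i (measurableSet_singleton 0)
    have hdisj : Disjoint {ω | X i ω = b} {ω | X i ω = 0} := by
      rw [Set.disjoint_left]
      rintro ω h1 h2
      exact hb.ne' (h1.symm.trans h2)
    have hu : μ ({ω | X i ω = b} ∪ {ω | X i ω = 0}) = 1 := by
      rw [measure_union hdisj hm0, hdistb i, hdist0 i,
        ← ENNReal.ofReal_add hp0.le (by linarith)]
      norm_num
    have hcompl : μ ({ω | X i ω = b} ∪ {ω | X i ω = 0})ᶜ = 0 := by
      rw [measure_compl (hmb.union hm0) (measure_ne_top μ _), hu, measure_univ]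
      simp
    rw [ae_iff]
    have hsetq : {ω | ¬(X i ω = b ∨ X i ω = 0)} = ({ω | X i ω = b} ∪ {ω | X i ω = 0})ᶜ := by
      ext ω; simp [not_or]
    rw [hsetq]
    exact hcompl
  -- pointwise identification on the good set
  have hptwise : ∀ ω, (∀ i, X i ω = b ∨ X i ω = 0) →
      g (fun i => X i ω) = G (T ω) := by
    intro ω hω
    rw [hG]
    congr 1
    funext i
    rcases hω i with h | h
    · simp [hT, h]
    · have h0b : (0:ℝ) ≠ b := fun hh => hb.ne' hh.symm
      simp [hT, h, h0b]
  have hae : (fun ω => g (fun i => X i ω)) =ᵐ[μ] fun ω => G (T ω) := by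
    filter_upwards [hgood_ae] with ω hω using hptwise ω hω
  -- point masses of ν
  have hpoint : ∀ c : Fin n → Bool, ν {c} = ENNReal.ofReal (bw p c) := by
    intro c
    rw [hν, Measure.map_apply hTmeas (measurableSet_singleton c)]
    have hTpre : T ⁻¹' {c} = ⋂ i, X i ⁻¹' (if c i then ({b} : Set ℝ) else {b}ᶜ) := by
      ext ω
      simp only [Set.mem_preimage, Set.mem_singleton_iff, Set.mem_iInter, funext_iff, hT]
      apply forall_congr'
      intro i
      cases hc : c i <;> simp [hc]
    rw [hTpre]
    rw [hindep.meas_iInter (fun i => ⟨(if c i then ({b} : Set ℝ) else {b}ᶜ), by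
      split
      · exact measurableSet_singleton b
      · exact (measurableSet_singleton b).compl, rfl⟩)]
    have hfac : ∀ i, μ (X i ⁻¹' (if c i then ({b} : Set ℝ) else {b}ᶜ))
        = ENNReal.ofReal (if c i then p else 1 - p) := by
      intro i
      cases hc : c i
      · rw [if_neg (by simp [hc]), if_neg (by simp [hc])]
        have hmb2 : MeasurableSet {ω | X i ω = b} := hmeas i (measurableSet_singleton b)
        have hpre : X i ⁻¹' ({b}ᶜ : Set ℝ) = {ω | X i ω = b}ᶜ := by
          ext ω; simp
        rw [hpre, measure_compl hmb2 (measure_ne_top μ _),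
          hdistb i, measure_univ, ENNReal.ofReal_sub _ hp0.le]
        simp
      · rw [if_pos (by simp [hc]), if_pos (by simp [hc])]
        have hpre : X i ⁻¹' ({b} : Set ℝ) = {ω | X i ω = b} := by ext ω; simp
        rw [hpre, hdistb i]
    calc ∏ i, μ (X i ⁻¹' (if c i then ({b} : Set ℝ) else {b}ᶜ))
        = ∏ i, ENNReal.ofReal (if c i then p else 1 - p) := by
          exact Finset.prod_congr rfl fun i _ => hfac i
      _ = ENNReal.ofReal (∏ i, (if c i then p else 1 - p)) := by
          rw [ENNReal.ofReal_prod_of_nonneg]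
          intro i _
          split <;> linarith
      _ = ENNReal.ofReal (bw p c) := rfl
  -- the integral equals the finite expectation
  have hI : ∫ ω', g (fun i => X i ω') ∂μ = bEx p G := by
    rw [integral_congr_ae hae]
    rw [← integral_map hTmeas.aemeasurable hGmeas.aestronglyMeasurable]
    rw [MeasureTheory.integral_fintype (Integrable.of_finite)]
    unfold bEx
    apply Finset.sum_congr rfl
    intro c _
    rw [measureReal_def, hpoint c, ENNReal.toReal_ofReal (bw_nonneg hp0.le hp1.le c), smul_eq_mul]
  -- bounded differences of G
  have hBD : BDiff (b * L) G := by
    intro c i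
    have hmem : ∀ (z : Fin n → Bool) (j : Fin n),
        (if z j then b else 0) ∈ Set.Icc (0:ℝ) b := by
      intro z j
      split <;> simp [Set.mem_Icc, hb.le]
    have hgle := hg (fun j => if Function.update c i true j then b else 0)
      (fun j => if Function.update c i false j then b else 0)
      (fun j => hmem _ j) (fun j => hmem _ j)
    have hsum : ∑ j, |(if Function.update c i true j then b else 0)
        - (if Function.update c i false j then b else 0)| = b := by
      rw [Finset.sum_eq_single i]
      · simp [Function.update_self, abs_of_nonneg hb.le]
      · intro j _ hj
        rw [Function.update_of_ne hj, Function.update_of_ne hj]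
        simp
      · simp
    rw [hsum] at hgle
    calc |G (Function.update c i true) - G (Function.update c i false)|
        = |g (fun j => if Function.update c i true j then b else 0)
          - g (fun j => if Function.update c i false j then b else 0)| := rfl
      _ ≤ L * b := hgle
      _ = b * L := mul_comm L b
  -- transfer the event
  set a : ℝ := ε * p * n * b * L with ha
  set Sf : Finset (Fin n → Bool) := univ.filter (fun c => a ≤ |G c - bEx p G|) with hSf
  have hSmeas : MeasurableSet (↑Sf : Set (Fin n → Bool)) :=
    (Set.to_countable _).measurableSet
  have hEvsub : {ω | a ≤ |g (fun i => X i ω) - ∫ ω', g (fun i => X i ω') ∂μ|}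
      ⊆ T ⁻¹' ↑Sf ∪ {ω | ¬ ∀ i, X i ω = b ∨ X i ω = 0} := by
    intro ω hω
    by_cases hgood : ∀ i, X i ω = b ∨ X i ω = 0
    · left
      simp only [Set.mem_preimage, Finset.coe_filter, Set.mem_setOf_eq, hSf,
        Finset.mem_coe, Finset.mem_filter, Finset.mem_univ, true_and]
      rw [← hptwise ω hgood, ← hI]
      exact hω
    · right; exact hgood
  have hNnull : μ {ω | ¬ ∀ i, X i ω = b ∨ X i ω = 0} = 0 := ae_iff.mp hgood_ae
  have hmain : μ {ω | a ≤ |g (fun i => X i ω) - ∫ ω', g (fun i => X i ω') ∂μ|}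
      ≤ ν ↑Sf := by
    calc μ {ω | a ≤ |g (fun i => X i ω) - ∫ ω', g (fun i => X i ω') ∂μ|}
        ≤ μ (T ⁻¹' ↑Sf ∪ {ω | ¬ ∀ i, X i ω = b ∨ X i ω = 0}) := measure_mono hEvsub
      _ ≤ μ (T ⁻¹' ↑Sf) + μ {ω | ¬ ∀ i, X i ω = b ∨ X i ω = 0} := measure_union_le _ _
      _ = μ (T ⁻¹' ↑Sf) := by rw [hNnull, add_zero]
      _ = ν ↑Sf := (Measure.map_apply hTmeas hSmeas).symm
  have hνS : ν ↑Sf = ENNReal.ofReal (∑ c ∈ Sf, bw p c) := by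
    have hcup : (↑Sf : Set (Fin n → Bool)) = ⋃ c ∈ Sf, {c} := by
      ext x; simp
    rw [hcup, measure_biUnion_finset ?hd (fun c _ => measurableSet_singleton c)]
    · trans (∑ c ∈ Sf, ENNReal.ofReal (bw p c))
      · exact Finset.sum_congr rfl (fun c _ => hpoint c)
      · exact (ENNReal.ofReal_sum_of_nonneg (fun c _ => bw_nonneg hp0.le hp1.le c)).symm
    case hd =>
      intro x _ y _ hxy
      simp only [Function.onFun]
      exact Set.disjoint_singleton.2 hxy
  have htail := tail_two_sided (m := n) hp0 hp1 (mul_pos hb hL) hε0 hε1 G hBD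
  have ha2 : ε * p * (n:ℝ) * (b * L) = a := by rw [ha]; ring
  rw [ha2] at htail
  calc (μ {ω | a ≤ |g (fun i => X i ω) - ∫ ω', g (fun i => X i ω') ∂μ|}).toReal
      ≤ (ν ↑Sf).toReal := by
        apply ENNReal.toReal_mono _ hmain
        exact (measure_lt_top ν _).ne
    _ = ∑ c ∈ Sf, bw p c := by
        rw [hνS, ENNReal.toReal_ofReal (Finset.sum_nonneg fun c _ => bw_nonneg hp0.le hp1.le c)]
    _ ≤ 2 * Real.exp (-(ε ^ 2 * p * n) / 3) := htail
end

section
/- Let g(d) denote the minimum cost of a flow instance on a metric space where each client c in a set C' has demand d_c, clients outside C' have demand 1, and a special point f' has demand N − Σ_{c∈C'} d_c, where N = |C'|. Suppose every client in C' is within distance R of f'. Then g is R-Lipschitz with respect to the ℓ₁ norm on demand vectors: for any d, d' with d' = d + δ·𝟙_c for some c ∈ C' and δ ≥ 0, |g(d') − g(d)| ≤ δ·R. -/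
open Finset

/-- The set of achievable costs of feasible flows on a finite metric space `V`:
a flow `μ u v ≥ 0` routes mass along metric edges, each non-center node `v ∉ F`
has net outflow equal to its demand `b v`, and each center `f ∈ F` absorbs a
nonnegative amount of flow, at most its capacity `η f`. -/
def flowFeasibleCosts {V : Type*} [Fintype V] [MetricSpace V]
    (F : Finset V) (η : V → ℝ) (b : V → ℝ) : Set ℝ :=
  {y : ℝ | ∃ μ : V → V → ℝ,
    (∀ u v, 0 ≤ μ u v) ∧
    (∀ v, v ∉ F → (∑ u, μ v u) - (∑ u, μ u v) = b v) ∧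
    (∀ f ∈ F, 0 ≤ (∑ u, μ u f) - (∑ u, μ f u) ∧
      (∑ u, μ u f) - (∑ u, μ f u) ≤ η f) ∧
    y = ∑ u, ∑ v, μ u v * dist u v}

/-- The min-cost flow value `g(b)` as a function of the demand vector `b`. -/
noncomputable def flowCost {V : Type*} [Fintype V] [MetricSpace V]
    (F : Finset V) (η : V → ℝ) (b : V → ℝ) : ℝ :=
  sInf (flowFeasibleCosts F η b)

lemma flowFeasibleCosts_nonneg {V : Type*} [Fintype V] [MetricSpace V]
    (F : Finset V) (η : V → ℝ) (b : V → ℝ) {y : ℝ}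
    (hy : y ∈ flowFeasibleCosts F η b) : 0 ≤ y := by
  obtain ⟨μ, hμ, -, -, rfl⟩ := hy
  exact Finset.sum_nonneg fun u _ => Finset.sum_nonneg fun v _ =>
    mul_nonneg (hμ u v) dist_nonneg

lemma flowFeasibleCosts_bddBelow {V : Type*} [Fintype V] [MetricSpace V]
    (F : Finset V) (η : V → ℝ) (b : V → ℝ) :
    BddBelow (flowFeasibleCosts F η b) :=
  ⟨0, fun _ hy => flowFeasibleCosts_nonneg F η b hy⟩

/-- Shifting `δ` units of demand from `f'` to `c` increases a feasible cost by
at most `δ * dist c f'`. -/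
lemma flowFeasibleCosts_shift {V : Type*} [Fintype V] [MetricSpace V] [DecidableEq V]
    (F : Finset V) (η : V → ℝ) (c f' : V) (hc : c ∉ F) (hf' : f' ∉ F)
    (hcf : c ≠ f') (δ : ℝ) (hδ : 0 ≤ δ) (b : V → ℝ) {y : ℝ}
    (hy : y ∈ flowFeasibleCosts F η b) :
    y + δ * dist c f' ∈ flowFeasibleCosts F η
      (fun v => b v + δ * (if v = c then 1 else 0)
        - δ * (if v = f' then 1 else 0)) := by
  obtain ⟨μ, hμ, hbal, hcap, rfl⟩ := hy
  refine ⟨fun u v => μ u v + if u = c ∧ v = f' then δ else 0, ?_, ?_, ?_, ?_⟩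
  · intro u v
    dsimp only
    have h0 : (0:ℝ) ≤ if u = c ∧ v = f' then δ else 0 := by positivity
    linarith [hμ u v]
  · intro v hv
    have h1 : ∀ w : V, (∑ u, (μ w u + if w = c ∧ u = f' then δ else 0))
        = (∑ u, μ w u) + if w = c then δ else 0 := by
      intro w
      rw [Finset.sum_add_distrib]
      congr 1
      by_cases hw : w = c
      · simp [hw]
      · simp [hw]
    have h2 : ∀ w : V, (∑ u, (μ u w + if u = c ∧ w = f' then δ else 0))
        = (∑ u, μ u w) + if w = f' then δ else 0 := by
      intro w
      rw [Finset.sum_add_distrib]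
      congr 1
      by_cases hw : w = f'
      · simp [hw]
      · simp [hw]
    rw [h1, h2]
    have := hbal v hv
    by_cases hvc : v = c
    · subst hvc
      simp only [if_pos rfl, if_neg hcf, if_true, mul_one, mul_zero, add_zero, sub_zero]
      linarith
    · by_cases hvf : v = f'
      · subst hvf
        simp only [if_pos rfl, if_neg hvc, if_true, mul_one, mul_zero, add_zero, sub_zero,
          zero_add]
        linarith
      · simp only [if_neg hvc, if_neg hvf, mul_zero, add_zero, sub_zero]
        linarith
  · intro f hf
    have hfc : f ≠ c := fun h => hc (h ▸ hf)
    have hff : f ≠ f' := fun h => hf' (h ▸ hf)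
    have h1 : (∑ u, (μ f u + if f = c ∧ u = f' then δ else 0)) = ∑ u, μ f u := by
      simp [hfc]
    have h2 : (∑ u, (μ u f + if u = c ∧ f = f' then δ else 0)) = ∑ u, μ u f := by
      simp [hff]
    rw [h1, h2]
    exact hcap f hf
  · dsimp only
    have hexp : ∀ u v : V, (μ u v + if u = c ∧ v = f' then δ else 0) * dist u v
        = μ u v * dist u v + if u = c ∧ v = f' then δ * dist c f' else 0 := by
      intro u v
      by_cases h : u = c ∧ v = f'
      · obtain ⟨h1, h2⟩ := h
        subst h1; subst h2
        simp; ring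
      · simp [h]
    have hrow : ∀ u : V, (∑ v, ((μ u v + if u = c ∧ v = f' then δ else 0) * dist u v))
        = (∑ v, μ u v * dist u v) + if u = c then δ * dist c f' else 0 := by
      intro u
      rw [Finset.sum_congr rfl fun v _ => hexp u v, Finset.sum_add_distrib]
      congr 1
      by_cases hu : u = c
      · simp [hu]
      · simp [hu]
    rw [Finset.sum_congr rfl fun u _ => hrow u, Finset.sum_add_distrib]
    simp

/-- The min-cost flow value `g` is `R`-Lipschitz in ℓ₁ with
respect to demands: if `d' = d + δ·𝟙_c - δ·𝟙_{f'}` shifts `δ ≥ 0` units of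
demand from the special point `f'` to a client `c` with `dist c f' ≤ R` (both
feasible), then `|g(d') - g(d)| ≤ δ·R`. -/
theorem flowCost_lipschitz {V : Type*} [Fintype V] [MetricSpace V] [DecidableEq V]
    (F : Finset V) (η : V → ℝ) (c f' : V) (hc : c ∉ F) (hf' : f' ∉ F)
    (hcf : c ≠ f') (R δ : ℝ) (hδ : 0 ≤ δ) (hdist : dist c f' ≤ R)
    (b b' : V → ℝ)
    (hb' : b' = fun v => b v + δ * (if v = c then 1 else 0)
      - δ * (if v = f' then 1 else 0))
    (hfeas : (flowFeasibleCosts F η b).Nonempty)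
    (hfeas' : (flowFeasibleCosts F η b').Nonempty) :
    |flowCost F η b' - flowCost F η b| ≤ δ * R := by
  have hbb : b = fun v => b' v + δ * (if v = f' then 1 else 0)
      - δ * (if v = c then 1 else 0) := by
    funext v
    simp only [hb']
    ring
  have hδd : δ * dist c f' ≤ δ * R := mul_le_mul_of_nonneg_left hdist hδ
  -- g(b') ≤ g(b) + δ * dist c f'
  have h1 : flowCost F η b' ≤ flowCost F η b + δ * dist c f' := by
    have hlb : ∀ y ∈ flowFeasibleCosts F η b,
        flowCost F η b' - δ * dist c f' ≤ y := by
      intro y hy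
      have := csInf_le (flowFeasibleCosts_bddBelow F η b')
        (hb' ▸ flowFeasibleCosts_shift F η c f' hc hf' hcf δ hδ b hy)
      unfold flowCost
      linarith
    have := le_csInf hfeas hlb
    unfold flowCost at *
    linarith
  -- g(b) ≤ g(b') + δ * dist c f'
  have h2 : flowCost F η b ≤ flowCost F η b' + δ * dist c f' := by
    have hlb : ∀ y ∈ flowFeasibleCosts F η b',
        flowCost F η b - δ * dist c f' ≤ y := by
      intro y hy
      have hshift := flowFeasibleCosts_shift F η f' c hf' hc hcf.symm δ hδ b' hy
      rw [← hbb] at hshift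
      have := csInf_le (flowFeasibleCosts_bddBelow F η b) hshift
      have hdd : dist f' c = dist c f' := dist_comm f' c
      unfold flowCost
      rw [hdd] at this
      linarith
    have := le_csInf hfeas' hlb
    unfold flowCost at *
    linarith
  rw [abs_le]
  constructor <;> linarith
end

section
/- Let (V, dist) be a metric space and let c, f*, ℓ, f ∈ V satisfy: dist(ℓ, f*) ≤ dist(c, f*) (ℓ is the closest assigned client to f*), dist(ℓ, f*) ≥ R, dist(ℓ, f) ≤ (1+ε)R, and dist(ℓ, f*) ≤ (1+ε)R. Then dist(c, f) ≤ (3 + 2ε)·dist(c, f*). -/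
/-- leader-guessing inequality: if `dist(ℓ,f*) ≤ dist(c,f*)`,
`dist(ℓ,f*) ≥ R`, `dist(ℓ,f) ≤ (1+ε)R` and `dist(ℓ,f*) ≤ (1+ε)R`, then
`dist(c,f) ≤ (3+2ε)·dist(c,f*)`. -/
theorem leader_guessing_dist_bound {V : Type*} [MetricSpace V]
    (c fstar ℓ f : V) (R ε : ℝ) (hR : 0 < R) (hε : 0 ≤ ε)
    (hclosest : dist ℓ fstar ≤ dist c fstar)
    (hlower : R ≤ dist ℓ fstar)
    (hf : dist ℓ f ≤ (1 + ε) * R)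
    (hfstar : dist ℓ fstar ≤ (1 + ε) * R) :
    dist c f ≤ (3 + 2 * ε) * dist c fstar := by
  have h1 := dist_triangle c ℓ f
  have h2 := dist_triangle c fstar ℓ
  have h3 : dist fstar ℓ = dist ℓ fstar := dist_comm _ _
  nlinarith [dist_nonneg (x := c) (y := fstar)]
end
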